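/- For a one-parameter transformation group T_θ : ℝ² → ℝ² that is differentiable in θ and satisfies T_{θ+θ'} = T_θ ∘ T_{θ'}, a differentiable map ρ : ℝ² → ℝ² satisfies ρ(T_θ x) = ρ(x) + θe₁ for all θ if and only if ρ(T_0 x) = ρ(x) and (v₁(x) ∂ρ/∂x₁ + v₂(x) ∂ρ/∂x₂)(x) = e₁ for all x, where v(x) = (∂/∂θ)T_θ x |_{θ=0} is the infinitesimal generator. -/

import Mathlib

/-- Canonical coordinate condition is equivalent to the infinitesimal generator equation. -/
theorem stmt_12 (T : ℝ → ℝ × ℝ → ℝ × ℝ)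
    (hT0 : T 0 = id)
    (hTadd : ∀ θ θ' : ℝ, T (θ + θ') = T θ ∘ T θ')
    (hTdiff : ∀ x : ℝ × ℝ, Differentiable ℝ (fun θ => T θ x))
    (ρ : ℝ × ℝ → ℝ × ℝ) (hρ : ContDiff ℝ 1 ρ) :
    (∀ (θ : ℝ) (x : ℝ × ℝ), ρ (T θ x) = ρ x + θ • ((1 : ℝ), (0 : ℝ))) ↔
      (∀ x : ℝ × ℝ, ρ (T 0 x) = ρ x ∧
        fderiv ℝ ρ x (deriv (fun θ => T θ x) 0) = ((1 : ℝ), (0 : ℝ))) := by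
  have hρd : Differentiable ℝ ρ := hρ.differentiable one_ne_zero
  -- derivative of θ ↦ T θ x at θ₀ via group law
  have hTder : ∀ (x : ℝ × ℝ) (θ₀ : ℝ),
      HasDerivAt (fun θ => T θ x) (deriv (fun s => T s (T θ₀ x)) 0) θ₀ := by
    intro x θ₀
    have h1 : HasDerivAt (fun s => T s (T θ₀ x)) (deriv (fun s => T s (T θ₀ x)) 0) 0 :=
      ((hTdiff (T θ₀ x)) 0).hasDerivAt
    have h1' : HasDerivAt (fun s => T s (T θ₀ x)) (deriv (fun s => T s (T θ₀ x)) 0) (θ₀ - θ₀) := by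
      simpa using h1
    have := h1'.comp_sub_const θ₀ θ₀
    refine this.congr_of_eventuallyEq (Filter.Eventually.of_forall fun θ => ?_)
    have : T θ x = T (θ - θ₀) (T θ₀ x) := by
      rw [← Function.comp_apply (f := T (θ - θ₀)), ← hTadd]
      ring_nf
    exact this
  have hcomp : ∀ (x : ℝ × ℝ) (θ₀ : ℝ),
      HasDerivAt (fun θ => ρ (T θ x))
        (fderiv ℝ ρ (T θ₀ x) (deriv (fun s => T s (T θ₀ x)) 0)) θ₀ := by
    intro x θ₀
    exact (hρd (T θ₀ x)).hasFDerivAt.comp_hasDerivAt θ₀ (hTder x θ₀)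
  constructor
  · intro h x
    refine ⟨by simp [h 0 x], ?_⟩
    have hL := hcomp x 0
    rw [hT0] at hL
    simp only [id] at hL
    have hR : HasDerivAt (fun θ : ℝ => ρ x + θ • ((1 : ℝ), (0 : ℝ)))
        ((1 : ℝ), (0 : ℝ)) 0 := by
      simpa using ((hasDerivAt_id (0:ℝ)).smul_const ((1:ℝ),(0:ℝ))).const_add (ρ x)
    have heq : (fun θ => ρ (T θ x)) = fun θ : ℝ => ρ x + θ • ((1 : ℝ), (0 : ℝ)) :=
      funext fun θ => h θ x
    rw [heq] at hL
    exact hL.unique hR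
  · intro h θ x
    -- g θ := ρ (T θ x) - θ • e₁ has zero derivative
    set g : ℝ → ℝ × ℝ := fun θ => ρ (T θ x) - θ • ((1 : ℝ), (0 : ℝ)) with hg
    have hgd : ∀ θ₀, HasDerivAt g 0 θ₀ := by
      intro θ₀
      have h1 := hcomp x θ₀
      rw [(h (T θ₀ x)).2] at h1
      have h2 : HasDerivAt (fun θ : ℝ => θ • ((1 : ℝ), (0 : ℝ))) ((1:ℝ),(0:ℝ)) θ₀ := by
        simpa using (hasDerivAt_id θ₀).smul_const ((1:ℝ),(0:ℝ))
      exact (h1.sub h2).congr_deriv (sub_self _)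
    have hconst : g θ = g 0 := by
      have : ∀ θ₀, fderiv ℝ g θ₀ = 0 := by
        intro θ₀
        rw [(hgd θ₀).hasFDerivAt.fderiv]
        ext : 1 <;> simp
      exact is_const_of_fderiv_eq_zero (fun θ₀ => (hgd θ₀).differentiableAt) this θ 0
    have h0 : g 0 = ρ x := by simp [hg, hT0]
    have : ρ (T θ x) - θ • ((1 : ℝ), (0 : ℝ)) = ρ x := by rw [← h0, ← hconst]
    linear_combination (norm := module) this
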